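/- Let I be a monomial ideal in R and let b_0, b_1, b_2 be distinct variables satisfying condition (⋆) with respect to I, and assume that b_1b_2 divides no element of G(I). Fix a monomial order > with b_0 > b_1 > b_2 and set f = b_0 + b_1 + b_2. For M ∈ G(I), let M̂ = b_1^{d_{b_0}(M)} · M / b_0^{d_{b_0}(M)}. Then ini((I, f)) is generated by b_0, together with the monomials M̂ for all M ∈ G(I), together with the monomials lcm(X, M')·b_2² for all monomials X, M' such that b_1X ∈ G(I) and b_0b_2M' ∈ G(I). -/

import Mathlib

open MvPolynomial

variable {σ k : Type*} [Field k]

/-- `I` is a monomial ideal if it is generated by monomials. -/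
def IsMonomialIdeal (I : Ideal (MvPolynomial σ k)) : Prop :=
  ∃ S : Set (σ →₀ ℕ),
    I = Ideal.span ((fun a => (monomial a (1 : k) : MvPolynomial σ k)) '' S)

/-- The exponents of the minimal monomial generators `G(I)` of a monomial ideal `I`:
the monomials in `I` that are minimal with respect to divisibility
(`x^b ∣ x^a ↔ b ≤ a`). -/
def minimalGens (I : Ideal (MvPolynomial σ k)) : Set (σ →₀ ℕ) :=
  {a | (monomial a (1 : k) : MvPolynomial σ k) ∈ I ∧
    ∀ b : σ →₀ ℕ, (monomial b (1 : k) : MvPolynomial σ k) ∈ I → b ≤ a → b = a}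

/-- The exponent of the leading monomial of `f` with respect to the monomial order `m`. -/
noncomputable def mdeg (m : MonomialOrder σ) (f : MvPolynomial σ k) : σ →₀ ℕ :=
  m.toSyn.symm (f.support.sup fun a => m.toSyn a)

/-- The leading term `in(f)` of `f` with respect to the monomial order `m`. -/
noncomputable def ltm (m : MonomialOrder σ) (f : MvPolynomial σ k) : MvPolynomial σ k :=
  monomial (mdeg m f) (f.coeff (mdeg m f))

/-- The initial ideal `ini(J)` of an ideal `J` with respect to the monomial order `m`:
the ideal generated by the leading terms of the nonzero elements of `J`. -/
noncomputable def iniIdeal (m : MonomialOrder σ) (J : Ideal (MvPolynomial σ k)) :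
    Ideal (MvPolynomial σ k) :=
  Ideal.span {p | ∃ g ∈ J, g ≠ 0 ∧ p = ltm m g}

/-- For an exponent `a`, the exponent of `M̂ = b₁^{d_{b₀}(M)} · M / b₀^{d_{b₀}(M)}`,
obtained from `M = x^a` by replacing every factor `b₀` by `b₁`. -/
noncomputable def hatExp (b0 b1 : σ) (a : σ →₀ ℕ) : σ →₀ ℕ :=
  a - Finsupp.single b0 (a b0) + Finsupp.single b1 (a b0)

section Infra

variable {σ k : Type*} [Field k]

lemma toSyn_mdeg (m : MonomialOrder σ) (p : MvPolynomial σ k) :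
    m.toSyn (mdeg m p) = p.support.sup fun a => m.toSyn a := by
  simp [mdeg]

lemma le_mdeg (m : MonomialOrder σ) {p : MvPolynomial σ k} {b : σ →₀ ℕ} (hb : b ∈ p.support) :
    m.toSyn b ≤ m.toSyn (mdeg m p) := by
  rw [toSyn_mdeg]; exact Finset.le_sup hb

lemma mdeg_mem (m : MonomialOrder σ) {p : MvPolynomial σ k} (hp : p ≠ 0) : mdeg m p ∈ p.support := by
  obtain ⟨b, hb, hval⟩ := Finset.exists_mem_eq_sup p.support
    (MvPolynomial.support_nonempty.2 hp) (fun a => m.toSyn a)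
  have : mdeg m p = b := by
    have := toSyn_mdeg m p
    rw [hval] at this
    exact m.toSyn.injective this
  rwa [this]

lemma coeff_mdeg_ne_zero (m : MonomialOrder σ) {p : MvPolynomial σ k} (hp : p ≠ 0) :
    MvPolynomial.coeff (mdeg m p) p ≠ 0 :=
  MvPolynomial.mem_support_iff.mp (mdeg_mem m hp)

lemma mdeg_eq_of (m : MonomialOrder σ) {p : MvPolynomial σ k} {μ : σ →₀ ℕ}
    (h : MvPolynomial.coeff μ p ≠ 0)
    (hb : ∀ b ∈ p.support, m.toSyn b ≤ m.toSyn μ) : mdeg m p = μ := by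
  apply m.toSyn.injective
  apply le_antisymm
  · rw [toSyn_mdeg]
    exact Finset.sup_le hb
  · exact le_mdeg m (MvPolynomial.mem_support_iff.2 h)

lemma mdeg_monomial (m : MonomialOrder σ) {a : σ →₀ ℕ} {c : k} (hc : c ≠ 0) :
    mdeg m (MvPolynomial.monomial a c) = a := by
  classical
  apply mdeg_eq_of
  · rwa [MvPolynomial.coeff_monomial, if_pos rfl]
  · intro b hb
    rw [MvPolynomial.support_monomial, if_neg hc, Finset.mem_singleton] at hb
    rw [hb]

lemma ltm_monomial (m : MonomialOrder σ) {a : σ →₀ ℕ} {c : k} (hc : c ≠ 0) :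
    ltm m (MvPolynomial.monomial a c) = MvPolynomial.monomial a c := by
  classical
  rw [ltm, mdeg_monomial m hc, MvPolynomial.coeff_monomial, if_pos rfl]

lemma monomial_mem_span_iff (m : MonomialOrder σ) {μ : σ →₀ ℕ} {c : k} (hc : c ≠ 0) {S : Set (σ →₀ ℕ)} :
    (MvPolynomial.monomial μ c : MvPolynomial σ k) ∈
      Ideal.span ((fun a => (MvPolynomial.monomial a (1 : k) : MvPolynomial σ k)) '' S) ↔
      ∃ e ∈ S, e ≤ μ := by
  classical
  rw [MvPolynomial.mem_ideal_span_monomial_image]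
  constructor
  · intro h
    exact h μ (by rw [MvPolynomial.support_monomial, if_neg hc]; simp)
  · intro h b hb
    rw [MvPolynomial.support_monomial, if_neg hc, Finset.mem_singleton] at hb
    rwa [hb]

lemma exists_minimalGens_le (m : MonomialOrder σ) {I : Ideal (MvPolynomial σ k)} {a : σ →₀ ℕ}
    (ha : (MvPolynomial.monomial a (1 : k) : MvPolynomial σ k) ∈ I) :
    ∃ g ∈ minimalGens I, g ≤ a := by
  have hwf : WellFounded (fun x y : σ →₀ ℕ => m.toSyn x < m.toSyn y) :=
    InvImage.wf _ (wellFounded_lt)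
  obtain ⟨b, ⟨hble, hbI⟩, hmin⟩ := hwf.has_min
    {b | b ≤ a ∧ (MvPolynomial.monomial b (1 : k) : MvPolynomial σ k) ∈ I} ⟨a, le_rfl, ha⟩
  refine ⟨b, ⟨hbI, fun c hcI hcb => ?_⟩, hble⟩
  have h1 : ¬ m.toSyn c < m.toSyn b := hmin c ⟨le_trans hcb hble, hcI⟩
  have h2 : m.toSyn c ≤ m.toSyn b := m.toSyn_monotone hcb
  exact m.toSyn.injective (le_antisymm h2 (not_lt.1 h1))

lemma span_minimalGens (m : MonomialOrder σ) {I : Ideal (MvPolynomial σ k)} (hI : IsMonomialIdeal I) :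
    I = Ideal.span ((fun a => (MvPolynomial.monomial a (1 : k) : MvPolynomial σ k)) ''
      minimalGens I) := by
  obtain ⟨S, hS⟩ := hI
  apply le_antisymm
  · conv_lhs => rw [hS]
    rw [Ideal.span_le]
    rintro _ ⟨s, hs, rfl⟩
    have hsI : (MvPolynomial.monomial s (1 : k) : MvPolynomial σ k) ∈ I := by
      rw [hS]; exact Ideal.subset_span ⟨s, hs, rfl⟩
    obtain ⟨g, hg, hle⟩ := exists_minimalGens_le m hsI
    exact (monomial_mem_span_iff m one_ne_zero).2 ⟨g, hg, hle⟩
  · rw [Ideal.span_le]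
    rintro _ ⟨g, hg, rfl⟩
    exact hg.1

end Infra

section Helpers

variable {σ k : Type*} [Field k]

lemma le_add_single {a κ : σ →₀ ℕ} {i j : σ}
    (h : a ≤ Finsupp.single i 1 + κ) (hi : a i ≤ κ i) :
    a ≤ Finsupp.single j 1 + κ := by
  classical
  intro t
  rcases eq_or_ne t i with rfl | ht
  · exact le_trans hi (by simp [Finsupp.add_apply])
  · have := h t
    rw [Finsupp.add_apply, Finsupp.single_apply, if_neg (fun hh => ht hh.symm)] at this
    simp only [Finsupp.add_apply]
    omega

lemma region {z : MvPolynomial σ k} {S : Set (σ →₀ ℕ)}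
    (hz : z ∈ Ideal.span ((fun a => (MvPolynomial.monomial a (1 : k) : MvPolynomial σ k)) '' S))
    {b : σ →₀ ℕ} (hb : b ∈ z.support) : ∃ s ∈ S, s ≤ b :=
  MvPolynomial.mem_ideal_span_monomial_image.1 hz b hb

lemma hatExp_of_b0_eq_zero {b0 b1 : σ} {a : σ →₀ ℕ} (h : a b0 = 0) :
    hatExp b0 b1 a = a := by
  simp [hatExp, h]

lemma hatExp_add_single {b0 b1 : σ} {n : σ →₀ ℕ} (h : n b0 = 0) :
    hatExp b0 b1 (Finsupp.single b0 1 + n) = Finsupp.single b1 1 + n := by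
  have h1 : (Finsupp.single b0 (1:ℕ) + n) b0 = 1 := by
    simp [Finsupp.add_apply, Finsupp.single_apply, h]
  rw [hatExp, h1, add_tsub_cancel_left, add_comm]

lemma support_sub_monomial (z : MvPolynomial σ k) (δ : σ →₀ ℕ) :
    ∀ b ∈ (z - MvPolynomial.monomial δ (MvPolynomial.coeff δ z)).support,
      b ∈ z.support ∧ b ≠ δ := by
  classical
  intro b hb
  rw [MvPolynomial.mem_support_iff, MvPolynomial.coeff_sub, MvPolynomial.coeff_monomial] at hb
  rcases eq_or_ne δ b with rfl | h
  · simp at hb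
  · rw [if_neg h, sub_zero] at hb
    exact ⟨MvPolynomial.mem_support_iff.2 hb, Ne.symm h⟩

lemma support_add_monomial (z : MvPolynomial σ k) (δ : σ →₀ ℕ) (w : k) :
    ∀ b ∈ (z + MvPolynomial.monomial δ w).support, b = δ ∨ b ∈ z.support := by
  classical
  intro b hb
  rcases Finset.mem_union.1 (MvPolynomial.support_add hb) with h | h
  · exact Or.inr h
  · have := MvPolynomial.support_monomial_subset h
    rw [Finset.mem_singleton] at this
    exact Or.inl this

lemma X_mul_monomial {i : σ} {κ : σ →₀ ℕ} {w : k} :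
    (MvPolynomial.X i : MvPolynomial σ k) * MvPolynomial.monomial κ w
      = MvPolynomial.monomial (Finsupp.single i 1 + κ) w := by
  rw [MvPolynomial.X, MvPolynomial.monomial_mul, one_mul]

lemma mem_span_monomial_of_support {z : MvPolynomial σ k} {S : Set (σ →₀ ℕ)}
    (h : ∀ b ∈ z.support, ∃ s ∈ S, s ≤ b) :
    z ∈ Ideal.span ((fun a => (MvPolynomial.monomial a (1 : k) : MvPolynomial σ k)) '' S) :=
  MvPolynomial.mem_ideal_span_monomial_image.2 h

end Helpers

/-- The set of exponents of the extra generators `lcm(X, M')·b₂²`. -/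
def lcmSet {σ k : Type*} [Field k] (I : Ideal (MvPolynomial σ k)) (b0 b1 b2 : σ) :
    Set (σ →₀ ℕ) :=
  {t | ∃ x m' : σ →₀ ℕ,
      (Finsupp.single b1 1 + x) ∈ minimalGens I ∧
      (Finsupp.single b0 1 + Finsupp.single b2 1 + m') ∈ minimalGens I ∧
      t = x ⊔ m' + Finsupp.single b2 2}

section Key

variable {σ k : Type*} [Field k]

lemma key (I : Ideal (MvPolynomial σ k)) (b0 b1 b2 : σ)
    (h01 : b0 ≠ b1) (h02 : b0 ≠ b2) (h12 : b1 ≠ b2)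
    (hstar1 : ∀ a ∈ minimalGens I, a b0 ≤ 1 ∧ a b1 ≤ 1 ∧ a b2 ≤ 1)
    (hstar2 : ∀ a ∈ minimalGens I, 1 ≤ a b0 → 1 ≤ a b1 ∨ 1 ≤ a b2)
    (h12div : ¬ ∃ a ∈ minimalGens I, Finsupp.single b1 1 + Finsupp.single b2 1 ≤ a)
    (m : MonomialOrder σ)
    (hord2 : m.toSyn (Finsupp.single b2 1) < m.toSyn (Finsupp.single b1 1))
    (D : m.syn) :
    ∀ p q c : MvPolynomial σ k,
      p ∈ Ideal.span ((fun a => (MvPolynomial.monomial a (1:k) : MvPolynomial σ k)) ''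
        {a | a ∈ minimalGens I ∧ a b0 = 0}) →
      q ∈ Ideal.span ((fun a => (MvPolynomial.monomial a (1:k) : MvPolynomial σ k)) ''
        {n | Finsupp.single b0 1 + n ∈ minimalGens I}) →
      c ∈ Ideal.span ((fun a => (MvPolynomial.monomial a (1:k) : MvPolynomial σ k)) ''
        lcmSet I b0 b1 b2) →
      ((p.support.sup fun b => m.toSyn b) ⊔
        (q.support.sup fun b => m.toSyn (Finsupp.single b1 1 + b)) ⊔
        (c.support.sup fun b => m.toSyn b)) = D →
      p + (X b1 + X b2) * q + c ≠ 0 →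
      ∃ e ∈ (hatExp b0 b1 '' minimalGens I) ∪ lcmSet I b0 b1 b2,
        e ≤ mdeg m (p + (X b1 + X b2) * q + c) := by
  classical
  induction D using WellFoundedLT.induction with
  | _ D IH =>
  intro p q c hp hq hc hD hr
  -- basic support facts
  have hXsupp : ∀ (i : σ) (z : MvPolynomial σ k), ∀ b ∈ ((X i : MvPolynomial σ k) * z).support,
      ∃ β ∈ z.support, b = Finsupp.single i 1 + β := by
    intro i z b hb
    rw [MvPolynomial.support_X_mul] at hb
    obtain ⟨β, hβ, hval⟩ := Finset.mem_map.1 hb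
    exact ⟨β, hβ, by rw [← hval]; rfl⟩
  have hcover : ∀ b ∈ (p + (X b1 + X b2) * q + c).support,
      b ∈ p.support ∨ b ∈ ((X b1 : MvPolynomial σ k) * q).support ∨
        b ∈ ((X b2 : MvPolynomial σ k) * q).support ∨ b ∈ c.support := by
    intro b hb
    rcases Finset.mem_union.1 (MvPolynomial.support_add hb) with h | h
    · rcases Finset.mem_union.1 (MvPolynomial.support_add h) with h' | h'
      · exact Or.inl h'
      · rw [add_mul] at h'
        rcases Finset.mem_union.1 (MvPolynomial.support_add h') with h'' | h''
        · exact Or.inr (Or.inl h'')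
        · exact Or.inr (Or.inr (Or.inl h''))
    · exact Or.inr (Or.inr (Or.inr h))
  have hboundp : ∀ b ∈ p.support, m.toSyn b ≤ D := fun b hb =>
    hD ▸ le_trans (Finset.le_sup hb) (le_trans le_sup_left le_sup_left)
  have hboundq : ∀ β ∈ q.support, m.toSyn (Finsupp.single b1 1 + β) ≤ D := fun β hβ =>
    hD ▸ le_trans (Finset.le_sup (f := fun b => m.toSyn (Finsupp.single b1 1 + b)) hβ)
      (le_trans le_sup_right le_sup_left)
  have hboundc : ∀ b ∈ c.support, m.toSyn b ≤ D := fun b hb =>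
    hD ▸ le_trans (Finset.le_sup hb) le_sup_right
  have hord2' : ∀ β : σ →₀ ℕ,
      m.toSyn (Finsupp.single b2 1 + β) < m.toSyn (Finsupp.single b1 1 + β) := by
    intro β
    rw [map_add, map_add]
    exact add_lt_add_of_lt_of_le hord2 le_rfl
  have hsupp_r : ∀ b ∈ (p + (X b1 + X b2) * q + c).support, m.toSyn b ≤ D := by
    intro b hb
    rcases hcover b hb with h | h | h | h
    · exact hboundp b h
    · obtain ⟨β, hβ, rfl⟩ := hXsupp b1 q b h
      exact hboundq β hβ
    · obtain ⟨β, hβ, rfl⟩ := hXsupp b2 q b h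
      exact le_trans (le_of_lt (hord2' β)) (hboundq β hβ)
    · exact hboundc b h
  set δ := m.toSyn.symm D with hδdef
  have hδ : m.toSyn δ = D := m.toSyn.apply_symm_apply D
  by_cases hcoef : MvPolynomial.coeff δ (p + (X b1 + X b2) * q + c) ≠ 0
  · -- Case A : the top monomial survives; locate it.
    have hμ : mdeg m (p + (X b1 + X b2) * q + c) = δ :=
      mdeg_eq_of m hcoef (fun b hb => hδ ▸ hsupp_r b hb)
    rw [hμ]
    have hδsupp : δ ∈ (p + (X b1 + X b2) * q + c).support :=
      MvPolynomial.mem_support_iff.2 hcoef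
    rcases hcover δ hδsupp with h | h | h | h
    · obtain ⟨a, ⟨haG, hab0⟩, hle⟩ := region hp h
      exact ⟨hatExp b0 b1 a, Or.inl ⟨a, haG, rfl⟩, by rw [hatExp_of_b0_eq_zero hab0]; exact hle⟩
    · obtain ⟨β, hβ, hval⟩ := hXsupp b1 q δ h
      obtain ⟨n, hnN, hnle⟩ := region hq hβ
      have hn0 : n b0 = 0 := by
        have := (hstar1 _ hnN).1
        simp only [Finsupp.add_apply, Finsupp.single_eq_same] at this
        omega
      refine ⟨hatExp b0 b1 (Finsupp.single b0 1 + n),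
        Or.inl ⟨Finsupp.single b0 1 + n, hnN, rfl⟩, ?_⟩
      rw [hatExp_add_single hn0, hval]
      exact add_le_add le_rfl hnle
    · obtain ⟨β, hβ, hval⟩ := hXsupp b2 q δ h
      exfalso
      have h1 : m.toSyn δ < m.toSyn (Finsupp.single b1 1 + β) := hval ▸ hord2' β
      exact absurd (lt_of_lt_of_le h1 (le_trans (hboundq β hβ) hδ.ge)) (lt_irrefl _)
    · obtain ⟨t, htC, hle⟩ := region hc h
      exact ⟨t, Or.inr htC, hle⟩
  · -- Case B : cancellation at the top.
    push_neg at hcoef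
    rcases eq_or_ne D ⊥ with rfl | hDbot
    · exfalso
      apply hr
      rw [← MvPolynomial.support_eq_empty]
      apply Finset.eq_empty_of_forall_notMem
      intro b hb
      have h1 : m.toSyn b ≤ ⊥ := hsupp_r b hb
      have h2 : b = δ := m.toSyn.injective (by rw [hδ]; exact le_antisymm h1 bot_le)
      rw [h2] at hb
      exact (MvPolynomial.mem_support_iff.1 hb) hcoef
    have hDpos : ⊥ < D := lt_of_le_of_ne bot_le (Ne.symm hDbot)
    have hlt : ∀ b : σ →₀ ℕ, m.toSyn b ≤ D → b ≠ δ → m.toSyn b < D := by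
      intro b h hne
      refine lt_of_le_of_ne h (fun he => hne (m.toSyn.injective (by rw [he, hδ])))
    have hcoefsplit : MvPolynomial.coeff δ p + (MvPolynomial.coeff δ ((X b1 : MvPolynomial σ k) * q)
        + MvPolynomial.coeff δ ((X b2 : MvPolynomial σ k) * q)) + MvPolynomial.coeff δ c = 0 := by
      have : MvPolynomial.coeff δ (p + (X b1 + X b2) * q + c) = 0 := hcoef
      rw [MvPolynomial.coeff_add, MvPolynomial.coeff_add, add_mul,
        MvPolynomial.coeff_add] at this
      exact this
    by_cases hqtop : q ≠ 0 ∧ m.toSyn (Finsupp.single b1 1 + mdeg m q) = D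
    · -- S-pair case
      obtain ⟨hqne, hqD⟩ := hqtop
      have hκs : mdeg m q ∈ q.support := mdeg_mem m hqne
      have hcq : MvPolynomial.coeff (mdeg m q) q ≠ 0 := coeff_mdeg_ne_zero m hqne
      have hδκ : δ = Finsupp.single b1 1 + mdeg m q := m.toSyn.injective (by rw [hδ, hqD])
      have hq1 : MvPolynomial.coeff δ ((X b1 : MvPolynomial σ k) * q)
          = MvPolynomial.coeff (mdeg m q) q := by
        rw [hδκ]; exact MvPolynomial.coeff_X_mul (mdeg m q) b1 q
      have hq2 : MvPolynomial.coeff δ ((X b2 : MvPolynomial σ k) * q) = 0 := by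
        by_contra h
        obtain ⟨β, hβ, hval⟩ := hXsupp b2 q δ (MvPolynomial.mem_support_iff.2 h)
        have h1 : m.toSyn δ < m.toSyn (Finsupp.single b1 1 + β) := hval ▸ hord2' β
        exact absurd (lt_of_lt_of_le h1 (le_trans (hboundq β hβ) hδ.ge)) (lt_irrefl _)
      have hsum : MvPolynomial.coeff δ p + MvPolynomial.coeff (mdeg m q) q
          + MvPolynomial.coeff δ c = 0 := by
        rw [hq1, hq2, add_zero] at hcoefsplit
        exact hcoefsplit
      obtain ⟨n, hnN, hnκ⟩ := region hq hκs
      have hnG : Finsupp.single b0 1 + n ∈ minimalGens I := hnN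
      have hn0 : n b0 = 0 := by
        have := (hstar1 _ hnG).1
        simp only [Finsupp.add_apply, Finsupp.single_eq_same] at this
        omega
      have hnb1κ : n b1 ≤ (mdeg m q) b1 := hnκ b1
      have hnb2κ : n b2 ≤ (mdeg m q) b2 := hnκ b2
      have hnd : 1 ≤ n b1 ∨ 1 ≤ n b2 := by
        have h2 := hstar2 _ hnG (by
          simp only [Finsupp.add_apply, Finsupp.single_eq_same]; omega)
        rcases h2 with h | h
        · left
          simpa only [Finsupp.add_apply, Finsupp.single_eq_of_ne' h01, zero_add] using h
        · right
          simpa only [Finsupp.add_apply, Finsupp.single_eq_of_ne' h02, zero_add] using h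
      -- absorption dichotomy
      have habs : (∃ a, (a ∈ minimalGens I ∧ a b0 = 0) ∧ a ≤ Finsupp.single b2 1 + mdeg m q)
          ∨ (∃ t ∈ lcmSet I b0 b1 b2, t ≤ Finsupp.single b2 1 + mdeg m q) := by
        by_cases hcp : MvPolynomial.coeff δ p = 0
        · right
          have hcc : MvPolynomial.coeff δ c ≠ 0 := by
            intro h
            rw [hcp, h, zero_add, add_zero] at hsum
            exact hcq hsum
          obtain ⟨t, htC, htle⟩ := region hc (MvPolynomial.mem_support_iff.2 hcc)
          have htle' : t ≤ Finsupp.single b1 1 + mdeg m q := hδκ ▸ htle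
          obtain ⟨x, m', hx, hm', rfl⟩ := htC
          have hxb1 : x b1 = 0 := by
            have := (hstar1 _ hx).2.1
            simp only [Finsupp.add_apply, Finsupp.single_eq_same] at this
            omega
          have hmb1 : m' b1 = 0 := by
            by_contra h
            apply h12div
            refine ⟨_, hm', ?_⟩
            intro i
            simp only [Finsupp.add_apply]
            rcases eq_or_ne b1 i with rfl | h1
            · rw [Finsupp.single_eq_same, Finsupp.single_eq_of_ne' (Ne.symm h12),
                Finsupp.single_eq_of_ne' h01]
              omega
            · rcases eq_or_ne b2 i with rfl | h2
              · rw [Finsupp.single_eq_of_ne' h1, Finsupp.single_eq_same,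
                  Finsupp.single_eq_of_ne' h02]
                omega
              · rw [Finsupp.single_eq_of_ne' h1, Finsupp.single_eq_of_ne' h2]
                omega
          have htb1 : ((x ⊔ m' + Finsupp.single b2 2 : σ →₀ ℕ)) b1 = 0 := by
            rw [Finsupp.add_apply, Finsupp.sup_apply, hxb1, hmb1,
              Finsupp.single_eq_of_ne' (Ne.symm h12)]
            simp
          exact ⟨_, ⟨x, m', hx, hm', rfl⟩,
            le_add_single htle' (by rw [htb1]; exact Nat.zero_le _)⟩
        · obtain ⟨a, ⟨haG, hab0⟩, hale⟩ := region hp (MvPolynomial.mem_support_iff.2 hcp)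
          have hale' : a ≤ Finsupp.single b1 1 + mdeg m q := hδκ ▸ hale
          by_cases hab1 : a b1 = 0
          · exact Or.inl ⟨a, ⟨haG, hab0⟩, le_add_single hale' (by rw [hab1]; exact Nat.zero_le _)⟩
          rcases hnd with hn1 | hn2
          · exact Or.inl ⟨a, ⟨haG, hab0⟩,
              le_add_single hale' (le_trans (hstar1 _ haG).2.1 (le_trans hn1 hnb1κ))⟩
          · right
            have hab1' : a b1 = 1 := le_antisymm (hstar1 _ haG).2.1 (Nat.one_le_iff_ne_zero.2 hab1)
            have hnb1 : n b1 = 0 := by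
              by_contra h
              apply h12div
              refine ⟨_, hnG, ?_⟩
              intro i
              simp only [Finsupp.add_apply]
              rcases eq_or_ne b1 i with rfl | h1
              · rw [Finsupp.single_eq_same, Finsupp.single_eq_of_ne' (Ne.symm h12),
                  Finsupp.single_eq_of_ne' h01]
                omega
              · rcases eq_or_ne b2 i with rfl | h2
                · rw [Finsupp.single_eq_of_ne' h1, Finsupp.single_eq_same,
                    Finsupp.single_eq_of_ne' h02]
                  omega
                · rw [Finsupp.single_eq_of_ne' h1, Finsupp.single_eq_of_ne' h2]
                  omega
            have hnb2' : n b2 = 1 := by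
              have := (hstar1 _ hnG).2.2
              simp only [Finsupp.add_apply, Finsupp.single_eq_of_ne' h02, zero_add] at this
              omega
            have hab2 : a b2 = 0 := by
              by_contra h
              apply h12div
              refine ⟨a, haG, ?_⟩
              intro i
              simp only [Finsupp.add_apply]
              rcases eq_or_ne b1 i with rfl | h1
              · rw [Finsupp.single_eq_same, Finsupp.single_eq_of_ne' (Ne.symm h12)]
                omega
              · rcases eq_or_ne b2 i with rfl | h2
                · rw [Finsupp.single_eq_of_ne' h1, Finsupp.single_eq_same]
                  omega
                · rw [Finsupp.single_eq_of_ne' h1, Finsupp.single_eq_of_ne' h2]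
                  omega
            have hxa : Finsupp.single b1 1 + (a - Finsupp.single b1 1) = a :=
              add_tsub_cancel_of_le (Finsupp.single_le_iff.2 (by omega))
            have hmn : Finsupp.single b2 1 + (n - Finsupp.single b2 1) = n :=
              add_tsub_cancel_of_le (Finsupp.single_le_iff.2 (by omega))
            have hpair2 : Finsupp.single b0 1 + Finsupp.single b2 1 + (n - Finsupp.single b2 1)
                ∈ minimalGens I := by
              rw [add_assoc, hmn]; exact hnG
            refine ⟨(a - Finsupp.single b1 1) ⊔ (n - Finsupp.single b2 1) + Finsupp.single b2 2,
              ⟨a - Finsupp.single b1 1, n - Finsupp.single b2 1, hxa ▸ haG, hpair2, rfl⟩, ?_⟩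
            intro i
            have h1 : a i ≤ ((Finsupp.single b1 1 + mdeg m q : σ →₀ ℕ)) i := hale' i
            have h2 : n i ≤ mdeg m q i := hnκ i
            simp only [Finsupp.add_apply, Finsupp.sup_apply, Finsupp.tsub_apply] at h1 ⊢
            rcases eq_or_ne b1 i with rfl | hi1
            · rw [Finsupp.single_eq_same] at h1 ⊢
              rw [Finsupp.single_eq_of_ne' (Ne.symm h12), Finsupp.single_eq_of_ne' (Ne.symm h12)]
              omega
            · rw [Finsupp.single_eq_of_ne' hi1] at h1 ⊢
              rcases eq_or_ne b2 i with rfl | hi2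
              · rw [Finsupp.single_eq_same, Finsupp.single_eq_same]
                omega
              · rw [Finsupp.single_eq_of_ne' hi2, Finsupp.single_eq_of_ne' hi2]
                omega
      -- reduction step
      have hX1 : (X b1 : MvPolynomial σ k) *
          MvPolynomial.monomial (mdeg m q) (MvPolynomial.coeff (mdeg m q) q)
          = MvPolynomial.monomial δ (MvPolynomial.coeff (mdeg m q) q) := by
        rw [X_mul_monomial, ← hδκ]
      have hX2 : (X b2 : MvPolynomial σ k) *
          MvPolynomial.monomial (mdeg m q) (MvPolynomial.coeff (mdeg m q) q)
          = MvPolynomial.monomial (Finsupp.single b2 1 + mdeg m q)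
              (MvPolynomial.coeff (mdeg m q) q) := X_mul_monomial
      have hmul : (X b1 + X b2 : MvPolynomial σ k) *
          MvPolynomial.monomial (mdeg m q) (MvPolynomial.coeff (mdeg m q) q)
          = MvPolynomial.monomial δ (MvPolynomial.coeff (mdeg m q) q)
            + MvPolynomial.monomial (Finsupp.single b2 1 + mdeg m q)
                (MvPolynomial.coeff (mdeg m q) q) := by
        rw [add_mul, hX1, hX2]
      have hzero : (MvPolynomial.monomial δ (MvPolynomial.coeff δ p)
          + MvPolynomial.monomial δ (MvPolynomial.coeff (mdeg m q) q)
          + MvPolynomial.monomial δ (MvPolynomial.coeff δ c) : MvPolynomial σ k) = 0 := by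
        rw [← map_add, ← map_add, hsum, map_zero]
      set p1 := p - MvPolynomial.monomial δ (MvPolynomial.coeff δ p) with hp1def
      set q1 := q - MvPolynomial.monomial (mdeg m q) (MvPolynomial.coeff (mdeg m q) q) with hq1def
      set c1 := c - MvPolynomial.monomial δ (MvPolynomial.coeff δ c) with hc1def
      set w := MvPolynomial.monomial (Finsupp.single b2 1 + mdeg m q)
        (MvPolynomial.coeff (mdeg m q) q) with hwdef
      have hp1m : p1 ∈ Ideal.span ((fun a => (MvPolynomial.monomial a (1:k) : MvPolynomial σ k)) ''
          {a | a ∈ minimalGens I ∧ a b0 = 0}) := by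
        apply mem_span_monomial_of_support
        intro b hb
        exact region hp (support_sub_monomial p δ b hb).1
      have hq1m : q1 ∈ Ideal.span ((fun a => (MvPolynomial.monomial a (1:k) : MvPolynomial σ k)) ''
          {n | Finsupp.single b0 1 + n ∈ minimalGens I}) := by
        apply mem_span_monomial_of_support
        intro b hb
        exact region hq (support_sub_monomial q (mdeg m q) b hb).1
      have hc1m : c1 ∈ Ideal.span ((fun a => (MvPolynomial.monomial a (1:k) : MvPolynomial σ k)) ''
          lcmSet I b0 b1 b2) := by
        apply mem_span_monomial_of_support
        intro b hb
        exact region hc (support_sub_monomial c δ b hb).1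
      have hwlt : m.toSyn (Finsupp.single b2 1 + mdeg m q) < D := by
        rw [← hqD]
        exact hord2' (mdeg m q)
      have hp1lt : ∀ b ∈ p1.support, m.toSyn b < D := by
        intro b hb
        obtain ⟨hbp, hbne⟩ := support_sub_monomial p δ b hb
        exact hlt b (hboundp b hbp) hbne
      have hq1lt : ∀ β ∈ q1.support, m.toSyn (Finsupp.single b1 1 + β) < D := by
        intro β hβ
        obtain ⟨hβq, hβne⟩ := support_sub_monomial q (mdeg m q) β hβ
        refine lt_of_le_of_ne (hboundq β hβq) (fun he => hβne ?_)
        have h1 : m.toSyn (Finsupp.single b1 1 + β)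
            = m.toSyn (Finsupp.single b1 1 + mdeg m q) := by rw [he, hqD]
        exact add_left_cancel (m.toSyn.injective h1)
      have hc1lt : ∀ b ∈ c1.support, m.toSyn b < D := by
        intro b hb
        obtain ⟨hbc, hbne⟩ := support_sub_monomial c δ b hb
        exact hlt b (hboundc b hbc) hbne
      have hwsupp : ∀ b ∈ w.support, b = Finsupp.single b2 1 + mdeg m q := by
        intro b hb
        have := MvPolynomial.support_monomial_subset hb
        rwa [Finset.mem_singleton] at this
      rcases habs with ⟨a', ha'A, ha'le⟩ | ⟨t, htC, htle⟩
      · -- absorb into p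
        have hp2m : p1 + w ∈ Ideal.span
            ((fun a => (MvPolynomial.monomial a (1:k) : MvPolynomial σ k)) ''
            {a | a ∈ minimalGens I ∧ a b0 = 0}) := by
          apply mem_span_monomial_of_support
          intro b hb
          rcases support_add_monomial p1 _ _ b hb with rfl | hb1
          · exact ⟨a', ha'A, ha'le⟩
          · exact region hp (support_sub_monomial p δ b hb1).1
        have hrid : (p1 + w) + (X b1 + X b2) * q1 + c1 = p + (X b1 + X b2) * q + c := by
          rw [hp1def, hq1def, hc1def, hwdef]
          rw [mul_sub]
          linear_combination -hmul - hzero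
        have hD2 : ((p1 + w).support.sup fun b => m.toSyn b) ⊔
            (q1.support.sup fun b => m.toSyn (Finsupp.single b1 1 + b)) ⊔
            (c1.support.sup fun b => m.toSyn b) < D := by
          refine sup_lt_iff.2 ⟨sup_lt_iff.2 ⟨?_, ?_⟩, ?_⟩
          · refine (Finset.sup_lt_iff hDpos).2 ?_
            intro b hb
            rcases support_add_monomial p1 _ _ b hb with rfl | hb1
            · exact hwlt
            · exact hp1lt b hb1
          · exact (Finset.sup_lt_iff hDpos).2 hq1lt
          · exact (Finset.sup_lt_iff hDpos).2 hc1lt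
        have hne2 : (p1 + w) + (X b1 + X b2) * q1 + c1 ≠ 0 := by rw [hrid]; exact hr
        have hres := IH _ hD2 (p1 + w) q1 c1 hp2m hq1m hc1m rfl hne2
        rwa [hrid] at hres
      · -- absorb into c
        have hc2m : c1 + w ∈ Ideal.span
            ((fun a => (MvPolynomial.monomial a (1:k) : MvPolynomial σ k)) ''
            lcmSet I b0 b1 b2) := by
          apply mem_span_monomial_of_support
          intro b hb
          rcases support_add_monomial c1 _ _ b hb with rfl | hb1
          · exact ⟨t, htC, htle⟩
          · exact region hc (support_sub_monomial c δ b hb1).1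
        have hrid : p1 + (X b1 + X b2) * q1 + (c1 + w) = p + (X b1 + X b2) * q + c := by
          rw [hp1def, hq1def, hc1def, hwdef]
          rw [mul_sub]
          linear_combination -hmul - hzero
        have hD2 : (p1.support.sup fun b => m.toSyn b) ⊔
            (q1.support.sup fun b => m.toSyn (Finsupp.single b1 1 + b)) ⊔
            ((c1 + w).support.sup fun b => m.toSyn b) < D := by
          refine sup_lt_iff.2 ⟨sup_lt_iff.2 ⟨?_, ?_⟩, ?_⟩
          · exact (Finset.sup_lt_iff hDpos).2 hp1lt
          · exact (Finset.sup_lt_iff hDpos).2 hq1lt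
          · refine (Finset.sup_lt_iff hDpos).2 ?_
            intro b hb
            rcases support_add_monomial c1 _ _ b hb with rfl | hb1
            · exact hwlt
            · exact hc1lt b hb1
        have hne2 : p1 + (X b1 + X b2) * q1 + (c1 + w) ≠ 0 := by rw [hrid]; exact hr
        have hres := IH _ hD2 p1 q1 (c1 + w) hp1m hq1m hc2m rfl hne2
        rwa [hrid] at hres
    · -- transfer / contradiction case
      -- no top contribution from q
      have hq1z : MvPolynomial.coeff δ ((X b1 : MvPolynomial σ k) * q) = 0 := by
        by_contra h
        obtain ⟨β, hβ, hval⟩ := hXsupp b1 q δ (MvPolynomial.mem_support_iff.2 h)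
        have hqne : q ≠ 0 := fun h0 => by simp [h0] at hβ
        have h1 : m.toSyn (Finsupp.single b1 1 + β) = D := by rw [← hval, hδ]
        have h2 : m.toSyn (Finsupp.single b1 1 + β)
            ≤ m.toSyn (Finsupp.single b1 1 + mdeg m q) := by
          rw [map_add, map_add]
          exact add_le_add le_rfl (le_mdeg m hβ)
        have h3 : m.toSyn (Finsupp.single b1 1 + mdeg m q) ≤ D := hboundq _ (mdeg_mem m hqne)
        exact hqtop ⟨hqne, le_antisymm h3 (h1 ▸ h2)⟩
      have hq2z : MvPolynomial.coeff δ ((X b2 : MvPolynomial σ k) * q) = 0 := by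
        by_contra h
        obtain ⟨β, hβ, hval⟩ := hXsupp b2 q δ (MvPolynomial.mem_support_iff.2 h)
        have h1 : m.toSyn δ < m.toSyn (Finsupp.single b1 1 + β) := hval ▸ hord2' β
        exact absurd (lt_of_lt_of_le h1 (le_trans (hboundq β hβ) hδ.ge)) (lt_irrefl _)
      have hpc : MvPolynomial.coeff δ p + MvPolynomial.coeff δ c = 0 := by
        rw [hq1z, hq2z] at hcoefsplit
        simpa using hcoefsplit
      have hqltD : (q.support.sup fun b => m.toSyn (Finsupp.single b1 1 + b)) < D := by
        rcases eq_or_ne q 0 with rfl | hqne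
        · simpa using hDpos
        · refine lt_of_le_of_ne (Finset.sup_le fun β hβ => hboundq β hβ) (fun hEq => ?_)
          obtain ⟨β, hβ, hval⟩ := Finset.exists_mem_eq_sup q.support
            (MvPolynomial.support_nonempty.2 hqne) (fun b => m.toSyn (Finsupp.single b1 1 + b))
          have h2 : m.toSyn (Finsupp.single b1 1 + β)
              ≤ m.toSyn (Finsupp.single b1 1 + mdeg m q) := by
            rw [map_add, map_add]
            exact add_le_add le_rfl (le_mdeg m hβ)
          have h3 : m.toSyn (Finsupp.single b1 1 + mdeg m q) ≤ D :=
            hboundq _ (mdeg_mem m hqne)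
          exact hqtop ⟨hqne, le_antisymm h3 (by rw [← hEq, hval]; exact h2)⟩
      by_cases hcp : MvPolynomial.coeff δ p = 0
      · exfalso
        have hcc : MvPolynomial.coeff δ c = 0 := by rwa [hcp, zero_add] at hpc
        have hpltD : (p.support.sup fun b => m.toSyn b) < D := by
          refine lt_of_le_of_ne (Finset.sup_le fun b hb => hboundp b hb) (fun hEq => ?_)
          have hpne : p ≠ 0 := by
            intro h0
            rw [h0] at hEq
            simp only [MvPolynomial.support_zero, Finset.sup_empty] at hEq
            exact hDbot hEq.symm
          obtain ⟨b, hb, hval⟩ := Finset.exists_mem_eq_sup p.support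
            (MvPolynomial.support_nonempty.2 hpne) (fun b => m.toSyn b)
          have hbδ : b = δ := m.toSyn.injective (by rw [← hval, hEq, hδ])
          exact (MvPolynomial.mem_support_iff.1 hb) (hbδ ▸ hcp)
        have hcltD : (c.support.sup fun b => m.toSyn b) < D := by
          refine lt_of_le_of_ne (Finset.sup_le fun b hb => hboundc b hb) (fun hEq => ?_)
          have hcne : c ≠ 0 := by
            intro h0
            rw [h0] at hEq
            simp only [MvPolynomial.support_zero, Finset.sup_empty] at hEq
            exact hDbot hEq.symm
          obtain ⟨b, hb, hval⟩ := Finset.exists_mem_eq_sup c.support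
            (MvPolynomial.support_nonempty.2 hcne) (fun b => m.toSyn b)
          have hbδ : b = δ := m.toSyn.injective (by rw [← hval, hEq, hδ])
          exact (MvPolynomial.mem_support_iff.1 hb) (hbδ ▸ hcc)
        have hfin : ((p.support.sup fun b => m.toSyn b) ⊔
            (q.support.sup fun b => m.toSyn (Finsupp.single b1 1 + b)) ⊔
            (c.support.sup fun b => m.toSyn b)) < D :=
          sup_lt_iff.2 ⟨sup_lt_iff.2 ⟨hpltD, hqltD⟩, hcltD⟩
        rw [hD] at hfin
        exact lt_irrefl D hfin
      · -- transfer the top coefficient of p to c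
        have hcc : MvPolynomial.coeff δ c ≠ 0 := by
          intro h
          exact hcp (by rwa [h, add_zero] at hpc)
        set p' := p - MvPolynomial.monomial δ (MvPolynomial.coeff δ p) with hp'def
        set c' := c + MvPolynomial.monomial δ (MvPolynomial.coeff δ p) with hc'def
        have hrid : p' + (X b1 + X b2) * q + c' = p + (X b1 + X b2) * q + c := by
          rw [hp'def, hc'def]; ring
        have hp'm : p' ∈ Ideal.span
            ((fun a => (MvPolynomial.monomial a (1:k) : MvPolynomial σ k)) ''
            {a | a ∈ minimalGens I ∧ a b0 = 0}) := by
          apply mem_span_monomial_of_support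
          intro b hb
          exact region hp (support_sub_monomial p δ b hb).1
        have hc'm : c' ∈ Ideal.span
            ((fun a => (MvPolynomial.monomial a (1:k) : MvPolynomial σ k)) ''
            lcmSet I b0 b1 b2) := by
          apply mem_span_monomial_of_support
          intro b hb
          rcases support_add_monomial c δ _ b hb with rfl | hbc
          · exact region hc (MvPolynomial.mem_support_iff.2 hcc)
          · exact region hc hbc
        have hc'δ : MvPolynomial.coeff δ c' = 0 := by
          rw [hc'def, MvPolynomial.coeff_add, MvPolynomial.coeff_monomial, if_pos rfl]
          linear_combination hpc
        have hp'lt : ∀ b ∈ p'.support, m.toSyn b < D := by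
          intro b hb
          obtain ⟨hbp, hbne⟩ := support_sub_monomial p δ b hb
          exact hlt b (hboundp b hbp) hbne
        have hc'lt : ∀ b ∈ c'.support, m.toSyn b < D := by
          intro b hb
          have hbne : b ≠ δ := by
            rintro rfl
            exact (MvPolynomial.mem_support_iff.1 hb) hc'δ
          rcases support_add_monomial c δ _ b hb with rfl | hbc
          · exact absurd rfl hbne
          · exact hlt b (hboundc b hbc) hbne
        have hD2 : ((p'.support.sup fun b => m.toSyn b) ⊔
            (q.support.sup fun b => m.toSyn (Finsupp.single b1 1 + b)) ⊔
            (c'.support.sup fun b => m.toSyn b)) < D := by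
          refine sup_lt_iff.2 ⟨sup_lt_iff.2 ⟨?_, hqltD⟩, ?_⟩
          · exact (Finset.sup_lt_iff hDpos).2 hp'lt
          · exact (Finset.sup_lt_iff hDpos).2 hc'lt
        have hne2 : p' + (X b1 + X b2) * q + c' ≠ 0 := by rw [hrid]; exact hr
        have hres := IH _ hD2 p' q c' hp'm hq hc'm rfl hne2
        rwa [hrid] at hres


end Key

section Subst

variable {σ k : Type*} [Field k]

open Classical in
/-- Substitution sending `b0` to `-(X b1 + X b2)` and fixing all other variables. -/
noncomputable def sb (b0 b1 b2 : σ) : MvPolynomial σ k →ₐ[k] MvPolynomial σ k :=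
  aeval (fun i => if i = b0 then -(X b1 + X b2) else X i)

lemma sb_X0 (b0 b1 b2 : σ) : sb b0 b1 b2 (X b0 : MvPolynomial σ k) = -(X b1 + X b2) := by
  classical
  rw [sb, aeval_X]
  simp

lemma sb_monomial_of_b0_eq_zero {b0 b1 b2 : σ} {a : σ →₀ ℕ} (h : a b0 = 0) (cf : k) :
    sb b0 b1 b2 (monomial a cf) = monomial a cf := by
  classical
  rw [MvPolynomial.monomial_eq, map_mul]
  have h1 : sb b0 b1 b2 (C cf : MvPolynomial σ k) = C cf := by
    rw [sb]; exact aeval_C _ cf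
  rw [h1]
  congr 1
  rw [map_finsuppProd]
  apply Finsupp.prod_congr
  intro i hi
  have hib0 : i ≠ b0 := by
    intro hEq
    rw [hEq] at hi
    exact (Finsupp.mem_support_iff.1 hi) h
  rw [map_pow, sb, aeval_X]
  simp [hib0]

lemma pow_support_bound (m : MonomialOrder σ) (b1 b2 : σ)
    (hord2 : m.toSyn (Finsupp.single b2 1) ≤ m.toSyn (Finsupp.single b1 1)) :
    ∀ (d : ℕ), ∀ b ∈ ((-(X b1 + X b2) : MvPolynomial σ k) ^ d).support,
      m.toSyn b ≤ m.toSyn (Finsupp.single b1 d) := by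
  classical
  intro d
  induction d with
  | zero =>
    intro b hb
    rw [pow_zero] at hb
    have h1 : (1 : MvPolynomial σ k) = monomial 0 1 := by
      rw [MvPolynomial.monomial_zero', MvPolynomial.C_1]
    rw [h1] at hb
    have := MvPolynomial.support_monomial_subset hb
    rw [Finset.mem_singleton] at this
    simp [this]
  | succ d ih =>
    intro b hb
    rw [pow_succ] at hb
    have hb' := MvPolynomial.support_mul _ _ hb
    rw [Finset.mem_add] at hb'
    obtain ⟨u, hu, v, hv, rfl⟩ := hb'
    have hvv : v = Finsupp.single b1 1 ∨ v = Finsupp.single b2 1 := by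
      rw [MvPolynomial.support_neg] at hv
      rcases Finset.mem_union.1 (MvPolynomial.support_add hv) with h | h
      · left; have := MvPolynomial.support_X (R := k) (n := b1) ▸ h
        rwa [Finset.mem_singleton] at this
      · right; have := MvPolynomial.support_X (R := k) (n := b2) ▸ h
        rwa [Finset.mem_singleton] at this
    have hvle : m.toSyn v ≤ m.toSyn (Finsupp.single b1 1) := by
      rcases hvv with rfl | rfl
      · exact le_refl _
      · exact hord2
    have : Finsupp.single b1 (d + 1) = Finsupp.single b1 d + Finsupp.single b1 1 := by
      rw [← Finsupp.single_add]
    rw [this, map_add, map_add]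
    exact add_le_add (ih u hu) hvle

lemma single_lt_single (m : MonomialOrder σ) {b0 b1 : σ}
    (hord1 : m.toSyn (Finsupp.single b1 1) < m.toSyn (Finsupp.single b0 1)) :
    ∀ d : ℕ, 1 ≤ d → m.toSyn (Finsupp.single b1 d) < m.toSyn (Finsupp.single b0 d) := by
  intro d
  induction d with
  | zero => omega
  | succ d ih =>
    intro _
    rcases Nat.eq_zero_or_pos d with rfl | hd'
    · simpa using hord1
    · have hd : 1 ≤ d := hd'
      have h1 : Finsupp.single b1 (d + 1) = Finsupp.single b1 d + Finsupp.single b1 1 := by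
        rw [← Finsupp.single_add]
      have h2 : Finsupp.single b0 (d + 1) = Finsupp.single b0 d + Finsupp.single b0 1 := by
        rw [← Finsupp.single_add]
      rw [h1, h2, map_add, map_add]
      exact add_lt_add (ih hd) hord1

lemma sb_support_bound (m : MonomialOrder σ) {b0 b1 b2 : σ}
    (hord1 : m.toSyn (Finsupp.single b1 1) < m.toSyn (Finsupp.single b0 1))
    (hord2 : m.toSyn (Finsupp.single b2 1) ≤ m.toSyn (Finsupp.single b1 1))
    (a : σ →₀ ℕ) (cf : k) :
    ∀ b ∈ (sb b0 b1 b2 (monomial a cf)).support,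
      (a b0 = 0 ∧ b = a) ∨ m.toSyn b < m.toSyn a := by
  classical
  intro b hb
  rcases eq_or_ne (a b0) 0 with h0 | h0
  · left
    rw [sb_monomial_of_b0_eq_zero h0] at hb
    have := MvPolynomial.support_monomial_subset hb
    rw [Finset.mem_singleton] at this
    exact ⟨h0, this⟩
  · right
    have hd : 1 ≤ a b0 := Nat.one_le_iff_ne_zero.2 h0
    set a' := a - Finsupp.single b0 (a b0) with ha'def
    have ha'0 : a' b0 = 0 := by
      rw [ha'def, Finsupp.tsub_apply, Finsupp.single_eq_same]
      omega
    have hsplit : Finsupp.single b0 (a b0) + a' = a :=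
      add_tsub_cancel_of_le (Finsupp.single_le_iff.2 le_rfl)
    have hmono : (monomial a cf : MvPolynomial σ k)
        = (X b0) ^ (a b0) * monomial a' cf := by
      rw [MvPolynomial.X_pow_eq_monomial, MvPolynomial.monomial_mul, one_mul, hsplit]
    rw [hmono, map_mul, map_pow, sb_X0, sb_monomial_of_b0_eq_zero ha'0] at hb
    have hb' := MvPolynomial.support_mul _ _ hb
    rw [Finset.mem_add] at hb'
    obtain ⟨u, hu, v, hv, rfl⟩ := hb'
    have hva : v = a' := by
      have := MvPolynomial.support_monomial_subset hv
      rwa [Finset.mem_singleton] at this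
    have h1 : m.toSyn u ≤ m.toSyn (Finsupp.single b1 (a b0)) :=
      pow_support_bound m b1 b2 hord2 (a b0) u hu
    have h2 : m.toSyn (Finsupp.single b1 (a b0)) < m.toSyn (Finsupp.single b0 (a b0)) :=
      single_lt_single m hord1 (a b0) hd
    calc m.toSyn (u + v) = m.toSyn u + m.toSyn v := by rw [map_add]
    _ ≤ m.toSyn (Finsupp.single b1 (a b0)) + m.toSyn v := add_le_add h1 le_rfl
    _ < m.toSyn (Finsupp.single b0 (a b0)) + m.toSyn v := add_lt_add_of_lt_of_le h2 le_rfl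
    _ = m.toSyn a := by rw [← map_add, hva, hsplit]

lemma sb_top (m : MonomialOrder σ) {b0 b1 b2 : σ}
    (hord1 : m.toSyn (Finsupp.single b1 1) < m.toSyn (Finsupp.single b0 1))
    (hord2 : m.toSyn (Finsupp.single b2 1) ≤ m.toSyn (Finsupp.single b1 1))
    {g : MvPolynomial σ k} (hb0 : (mdeg m g) b0 = 0) :
    MvPolynomial.coeff (mdeg m g) (sb b0 b1 b2 g) = MvPolynomial.coeff (mdeg m g) g ∧
    ∀ b ∈ (sb b0 b1 b2 g).support, m.toSyn b ≤ m.toSyn (mdeg m g) := by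
  classical
  have hrepr : sb b0 b1 b2 g
      = ∑ a ∈ g.support, sb b0 b1 b2 (monomial a (MvPolynomial.coeff a g)) := by
    conv_lhs => rw [g.as_sum]
    rw [map_sum]
  constructor
  · rw [hrepr, MvPolynomial.coeff_sum]
    rw [Finset.sum_eq_single (mdeg m g)]
    · rcases eq_or_ne g 0 with rfl | hg
      · simp
      · rw [sb_monomial_of_b0_eq_zero hb0, MvPolynomial.coeff_monomial, if_pos rfl]
    · intro a ha hane
      by_contra h
      have hmem : mdeg m g ∈ (sb b0 b1 b2 (monomial a (MvPolynomial.coeff a g))).support :=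
        MvPolynomial.mem_support_iff.2 h
      rcases sb_support_bound m hord1 hord2 a _ _ hmem with ⟨_, hEq⟩ | hlt
      · exact hane hEq.symm
      · exact absurd (lt_of_lt_of_le hlt (le_mdeg m ha)) (lt_irrefl _)
    · intro h
      rw [MvPolynomial.notMem_support_iff.1 h]
      simp
  · intro b hb
    rw [hrepr] at hb
    have hbne : MvPolynomial.coeff b
        (∑ a ∈ g.support, sb b0 b1 b2 (monomial a (MvPolynomial.coeff a g))) ≠ 0 :=
      MvPolynomial.mem_support_iff.1 hb
    rw [MvPolynomial.coeff_sum] at hbne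
    obtain ⟨a, ha, hane⟩ := Finset.exists_ne_zero_of_sum_ne_zero hbne
    rcases sb_support_bound m hord1 hord2 a _ _ (MvPolynomial.mem_support_iff.2 hane)
      with ⟨_, hEq⟩ | hlt
    · exact hEq ▸ le_mdeg m ha
    · exact le_of_lt (lt_of_lt_of_le hlt (le_mdeg m ha))

end Subst

section LtmLemmas

variable {σ k : Type*} [Field k]

lemma sb_X_ne {b0 b1 b2 i : σ} (h : i ≠ b0) : sb b0 b1 b2 (X i : MvPolynomial σ k) = X i := by
  classical
  rw [sb, aeval_X]
  simp [h]

lemma ltm_binomial (m : MonomialOrder σ) {u v : σ →₀ ℕ} (h : m.toSyn v < m.toSyn u) :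
    ltm m (MvPolynomial.monomial u (1:k) + MvPolynomial.monomial v (1:k))
      = MvPolynomial.monomial u 1 := by
  classical
  have hne : v ≠ u := fun hEq => absurd (hEq ▸ h) (lt_irrefl _)
  have hc : MvPolynomial.coeff u
      (MvPolynomial.monomial u (1:k) + MvPolynomial.monomial v (1:k)) = 1 := by
    rw [MvPolynomial.coeff_add, MvPolynomial.coeff_monomial, if_pos rfl,
      MvPolynomial.coeff_monomial, if_neg hne, add_zero]
  have hsup : ∀ b ∈ (MvPolynomial.monomial u (1:k) + MvPolynomial.monomial v (1:k)).support,
      m.toSyn b ≤ m.toSyn u := by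
    intro b hb
    rcases Finset.mem_union.1 (MvPolynomial.support_add hb) with hb' | hb'
    · have := MvPolynomial.support_monomial_subset hb'
      rw [Finset.mem_singleton] at this
      rw [this]
    · have := MvPolynomial.support_monomial_subset hb'
      rw [Finset.mem_singleton] at this
      rw [this]
      exact le_of_lt h
  have hmd := mdeg_eq_of m (by rw [hc]; exact one_ne_zero) hsup
  rw [ltm, hmd, hc]

lemma ltm_trinomial (m : MonomialOrder σ) {u v w : σ →₀ ℕ}
    (h1 : m.toSyn v < m.toSyn u) (h2 : m.toSyn w < m.toSyn u) :
    ltm m (MvPolynomial.monomial u (1:k) + MvPolynomial.monomial v (1:k)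
      + MvPolynomial.monomial w (1:k)) = MvPolynomial.monomial u 1 := by
  classical
  have hne1 : v ≠ u := fun hEq => absurd (hEq ▸ h1) (lt_irrefl _)
  have hne2 : w ≠ u := fun hEq => absurd (hEq ▸ h2) (lt_irrefl _)
  have hc : MvPolynomial.coeff u (MvPolynomial.monomial u (1:k)
      + MvPolynomial.monomial v (1:k) + MvPolynomial.monomial w (1:k)) = 1 := by
    rw [MvPolynomial.coeff_add, MvPolynomial.coeff_add, MvPolynomial.coeff_monomial,
      if_pos rfl, MvPolynomial.coeff_monomial, if_neg hne1,
      MvPolynomial.coeff_monomial, if_neg hne2, add_zero, add_zero]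
  have hsup : ∀ b ∈ (MvPolynomial.monomial u (1:k) + MvPolynomial.monomial v (1:k)
      + MvPolynomial.monomial w (1:k)).support, m.toSyn b ≤ m.toSyn u := by
    intro b hb
    rcases Finset.mem_union.1 (MvPolynomial.support_add hb) with hb' | hb'
    · rcases Finset.mem_union.1 (MvPolynomial.support_add hb') with hb'' | hb''
      · have := MvPolynomial.support_monomial_subset hb''
        rw [Finset.mem_singleton] at this
        rw [this]
      · have := MvPolynomial.support_monomial_subset hb''
        rw [Finset.mem_singleton] at this
        rw [this]
        exact le_of_lt h1
    · have := MvPolynomial.support_monomial_subset hb'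
      rw [Finset.mem_singleton] at this
      rw [this]
      exact le_of_lt h2
  have hmd := mdeg_eq_of m (by rw [hc]; exact one_ne_zero) hsup
  rw [ltm, hmd, hc]

end LtmLemmas

/-- Let `I` be a monomial ideal and `b₀, b₁, b₂` distinct variables
satisfying condition (⋆) such that `b₁b₂` divides no element of `G(I)`.  Fix a monomial
order with `b₀ > b₁ > b₂` and set `f = b₀ + b₁ + b₂`.  Then `ini((I, f))` is generated
by `b₀`, the monomials `M̂` for `M ∈ G(I)`, and the monomials `lcm(X, M')·b₂²` for
monomials `X, M'` with `b₁X ∈ G(I)` and `b₀b₂M' ∈ G(I)`. -/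
theorem stmt11 [Fintype σ]
    (I : Ideal (MvPolynomial σ k)) (hI : IsMonomialIdeal I)
    (b0 b1 b2 : σ) (h01 : b0 ≠ b1) (h02 : b0 ≠ b2) (h12 : b1 ≠ b2)
    (hstar1 : ∀ a ∈ minimalGens I, a b0 ≤ 1 ∧ a b1 ≤ 1 ∧ a b2 ≤ 1)
    (hstar2 : ∀ a ∈ minimalGens I, 1 ≤ a b0 → 1 ≤ a b1 ∨ 1 ≤ a b2)
    (h12div : ¬ ∃ a ∈ minimalGens I,
      Finsupp.single b1 1 + Finsupp.single b2 1 ≤ a)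
    (m : MonomialOrder σ)
    (hord1 : m.toSyn (Finsupp.single b1 1) < m.toSyn (Finsupp.single b0 1))
    (hord2 : m.toSyn (Finsupp.single b2 1) < m.toSyn (Finsupp.single b1 1))
    (f : MvPolynomial σ k) (hf : f = X b0 + X b1 + X b2) :
    iniIdeal m (I ⊔ Ideal.span {f})
      = Ideal.span
          ({(X b0 : MvPolynomial σ k)}
            ∪ {p | ∃ a ∈ minimalGens I, p = monomial (hatExp b0 b1 a) (1 : k)}
            ∪ {p | ∃ x m' : σ →₀ ℕ,
                (Finsupp.single b1 1 + x) ∈ minimalGens I ∧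
                (Finsupp.single b0 1 + Finsupp.single b2 1 + m') ∈ minimalGens I ∧
                p = monomial (x ⊔ m' + Finsupp.single b2 2) (1 : k)}) := by
  classical
  have hXdef : ∀ s : σ, (X s : MvPolynomial σ k) = monomial (Finsupp.single s 1) 1 :=
    fun s => rfl
  have hne21 : Finsupp.single b2 1 ≠ Finsupp.single b1 1 :=
    fun h => absurd (h ▸ hord2) (lt_irrefl _)
  set J := I ⊔ Ideal.span {f} with hJdef
  have hfJ : f ∈ J := Ideal.mem_sup_right (Ideal.subset_span rfl)
  have hIJ : I ≤ J := le_sup_left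
  have hltmf : ltm m f = monomial (Finsupp.single b0 1) 1 := by
    rw [hf, hXdef b0, hXdef b1, hXdef b2]
    exact ltm_trinomial m hord1 (hord2.trans hord1)
  have hfne : f ≠ 0 := by
    intro h0
    have h1 : MvPolynomial.coeff (Finsupp.single b0 1) f = 1 := by
      rw [hf, hXdef b0, hXdef b1, hXdef b2, MvPolynomial.coeff_add, MvPolynomial.coeff_add,
        MvPolynomial.coeff_monomial, if_pos rfl, MvPolynomial.coeff_monomial,
        if_neg (fun h => absurd (h ▸ hord1) (lt_irrefl _)),
        MvPolynomial.coeff_monomial, if_neg (fun h => absurd (h ▸ (hord2.trans hord1)) (lt_irrefl _)),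
        add_zero, add_zero]
    rw [h0] at h1
    simp at h1
  -- describe the right-hand side as the span of monomials over the exponent set E
  set E : Set (σ →₀ ℕ) := ({Finsupp.single b0 1} ∪ (hatExp b0 b1 '' minimalGens I))
    ∪ lcmSet I b0 b1 b2 with hEdef
  have hTE : ({(X b0 : MvPolynomial σ k)}
      ∪ {p | ∃ a ∈ minimalGens I, p = monomial (hatExp b0 b1 a) (1 : k)}
      ∪ {p | ∃ x m' : σ →₀ ℕ,
          (Finsupp.single b1 1 + x) ∈ minimalGens I ∧
          (Finsupp.single b0 1 + Finsupp.single b2 1 + m') ∈ minimalGens I ∧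
          p = monomial (x ⊔ m' + Finsupp.single b2 2) (1 : k)})
      = (fun e => (monomial e (1:k) : MvPolynomial σ k)) '' E := by
    rw [hEdef, Set.image_union, Set.image_union, Set.image_singleton]
    congr 1
    · congr 1
      ext p
      constructor
      · rintro ⟨a, ha, rfl⟩
        exact ⟨hatExp b0 b1 a, ⟨a, ha, rfl⟩, rfl⟩
      · rintro ⟨e, ⟨a, ha, rfl⟩, rfl⟩
        exact ⟨a, ha, rfl⟩
    · ext p
      constructor
      · rintro ⟨x, m', h1, h2, rfl⟩
        exact ⟨x ⊔ m' + Finsupp.single b2 2, ⟨x, m', h1, h2, rfl⟩, rfl⟩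
      · rintro ⟨t, ⟨x, m', h1, h2, rfl⟩, rfl⟩
        exact ⟨x, m', h1, h2, rfl⟩
  rw [hTE]
  apply le_antisymm
  · -- ini(J) ⊆ span of the stated monomials
    rw [iniIdeal, Ideal.span_le]
    rintro _ ⟨g, hgJ, hgne, rfl⟩
    have hcg : MvPolynomial.coeff (mdeg m g) g ≠ 0 := coeff_mdeg_ne_zero m hgne
    have hgoal : ∃ e ∈ E, e ≤ mdeg m g := by
      rcases eq_or_ne ((mdeg m g) b0) 0 with hb0 | hb0
      · -- eliminate b0 by substitution
        obtain ⟨gi, hgi, gf, hgf, hsum'⟩ := Submodule.mem_sup.1 hgJ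
        obtain ⟨h, hEq⟩ := Ideal.mem_span_singleton.1 hgf
        have hsbf : sb b0 b1 b2 f = 0 := by
          rw [hf, map_add, map_add, sb_X0, sb_X_ne (Ne.symm h01), sb_X_ne (Ne.symm h02)]
          ring
        have hsb_g : sb b0 b1 b2 g = sb b0 b1 b2 gi := by
          rw [← hsum', map_add, hEq, map_mul, hsbf, zero_mul, add_zero]
        obtain ⟨hcoeff_r, hbound_r⟩ := sb_top m hord1 (le_of_lt hord2) hb0 (g := g)
        have hrne : sb b0 b1 b2 g ≠ 0 :=
          MvPolynomial.ne_zero_iff.2 ⟨mdeg m g, by rw [hcoeff_r]; exact hcg⟩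
        have hmdeg_r : mdeg m (sb b0 b1 b2 g) = mdeg m g :=
          mdeg_eq_of m (by rw [hcoeff_r]; exact hcg) hbound_r
        -- decompose sb gi
        have hImap : Ideal.map ((sb b0 b1 b2 : MvPolynomial σ k →ₐ[k] MvPolynomial σ k) : MvPolynomial σ k →+* MvPolynomial σ k) I ≤
            Ideal.span ((fun a => (monomial a (1:k) : MvPolynomial σ k)) ''
              {a | a ∈ minimalGens I ∧ a b0 = 0})
            ⊔ Ideal.span ((fun n => (X b1 + X b2 : MvPolynomial σ k) * monomial n 1) ''
              {n | Finsupp.single b0 1 + n ∈ minimalGens I}) := by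
          conv_lhs => rw [span_minimalGens m hI]
          rw [Ideal.map_span, ← Set.image_comp, Ideal.span_le]
          rintro _ ⟨a, haG, rfl⟩
          rcases eq_or_ne (a b0) 0 with h0 | h0
          · apply Ideal.mem_sup_left
            apply Ideal.subset_span
            exact ⟨a, ⟨haG, h0⟩, by
              simp only [Function.comp_apply, RingHom.coe_coe]
              rw [sb_monomial_of_b0_eq_zero h0]⟩
          · have hab0 : a b0 = 1 := le_antisymm (hstar1 a haG).1 (by omega)
            have hsplit : Finsupp.single b0 1 + (a - Finsupp.single b0 1) = a :=
              add_tsub_cancel_of_le (Finsupp.single_le_iff.2 (by omega))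
            have hzero : ((a - Finsupp.single b0 1 : σ →₀ ℕ)) b0 = 0 := by
              rw [Finsupp.tsub_apply, Finsupp.single_eq_same]
              omega
            have hval : sb b0 b1 b2 (monomial a (1:k))
                = -((X b1 + X b2) * monomial (a - Finsupp.single b0 1) 1) := by
              have hm : (monomial a (1:k) : MvPolynomial σ k)
                  = X b0 * monomial (a - Finsupp.single b0 1) 1 := by
                rw [X_mul_monomial, hsplit]
              rw [hm, map_mul, sb_X0, sb_monomial_of_b0_eq_zero hzero, neg_mul]
            simp only [Function.comp_apply, RingHom.coe_coe]
            rw [hval]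
            apply neg_mem
            apply Ideal.mem_sup_right
            apply Ideal.subset_span
            exact ⟨a - Finsupp.single b0 1, by rw [Set.mem_setOf_eq, hsplit]; exact haG, rfl⟩
        have hmem2 := hImap (Ideal.mem_map_of_mem _ hgi)
        obtain ⟨zp, hzp, zq, hzq, hzsum⟩ := Submodule.mem_sup.1 hmem2
        simp only [RingHom.coe_coe] at hzsum
        have hzq' : ∃ qq ∈ Ideal.span ((fun a => (monomial a (1:k) : MvPolynomial σ k)) ''
            {n | Finsupp.single b0 1 + n ∈ minimalGens I}),
            zq = (X b1 + X b2 : MvPolynomial σ k) * qq := by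
          refine Submodule.span_induction ?_ ?_ ?_ ?_ hzq
          · rintro _ ⟨n, hn, rfl⟩
            exact ⟨monomial n 1, Ideal.subset_span ⟨n, hn, rfl⟩, rfl⟩
          · exact ⟨0, Submodule.zero_mem _, by ring⟩
          · rintro z1 z2 _ _ ⟨q1, hq1, rfl⟩ ⟨q2, hq2, rfl⟩
            exact ⟨q1 + q2, Submodule.add_mem _ hq1 hq2, by ring⟩
          · rintro a z _ ⟨q1, hq1, rfl⟩
            exact ⟨a * q1, Ideal.mul_mem_left _ a hq1, by rw [smul_eq_mul]; ring⟩
        obtain ⟨qq, hqq, hzqEq⟩ := hzq'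
        have hrform : sb b0 b1 b2 g = zp + (X b1 + X b2) * qq + 0 := by
          rw [hsb_g, ← hzsum, hzqEq, add_zero]
        obtain ⟨e, he, hele⟩ := key I b0 b1 b2 h01 h02 h12 hstar1 hstar2 h12div m hord2 _
          zp qq 0 hzp hqq (Submodule.zero_mem _) rfl (by rw [← hrform]; exact hrne)
        rw [← hrform, hmdeg_r] at hele
        refine ⟨e, ?_, hele⟩
        rcases he with h | h
        · exact Or.inl (Or.inr h)
        · exact Or.inr h
      · exact ⟨Finsupp.single b0 1, Or.inl (Or.inl rfl),
          Finsupp.single_le_iff.2 (by omega)⟩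
    obtain ⟨e, he, hele⟩ := hgoal
    rw [ltm]
    exact (monomial_mem_span_iff m hcg).2 ⟨e, he, hele⟩
  · -- every stated monomial is a leading term
    rw [Ideal.span_le]
    rintro _ ⟨e, he, rfl⟩
    rw [iniIdeal]
    apply Ideal.subset_span
    rcases he with (he1 | ⟨a, haG, rfl⟩) | ⟨x, m', hx, hm', rfl⟩
    · rw [Set.mem_singleton_iff] at he1
      subst he1
      exact ⟨f, hfJ, hfne, hltmf.symm⟩
    · rcases eq_or_ne (a b0) 0 with h0 | h0
      · refine ⟨monomial a 1, hIJ haG.1, ?_, ?_⟩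
        · rw [Ne, MvPolynomial.monomial_eq_zero]
          exact one_ne_zero
        · rw [hatExp_of_b0_eq_zero h0, ltm_monomial m one_ne_zero]
      · have hab0 : a b0 = 1 := le_antisymm (hstar1 a haG).1 (by omega)
        have hn : (a - Finsupp.single b0 1) + Finsupp.single b0 1 = a :=
          tsub_add_cancel_of_le (Finsupp.single_le_iff.2 (by omega))
        set n := a - Finsupp.single b0 1 with hndef
        set g := monomial n (1:k) * f - monomial a 1 with hgdef
        have hgJ : g ∈ J := sub_mem (Ideal.mul_mem_left _ _ hfJ) (hIJ haG.1)
        have hms : ∀ s : σ, monomial n (1:k) * X s = monomial (n + Finsupp.single s 1) 1 := by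
          intro s
          rw [hXdef s, MvPolynomial.monomial_mul, mul_one]
        have hgform : g = monomial (n + Finsupp.single b1 1) 1
            + monomial (n + Finsupp.single b2 1) 1 := by
          rw [hgdef, hf, mul_add, mul_add, hms b0, hms b1, hms b2, hn]
          ring
        have hlt2 : m.toSyn (n + Finsupp.single b2 1) < m.toSyn (n + Finsupp.single b1 1) := by
          rw [map_add, map_add]
          exact add_lt_add_of_le_of_lt le_rfl hord2
        have hgne : g ≠ 0 := by
          intro h0
          have h1 : MvPolynomial.coeff (n + Finsupp.single b1 1) g = 1 := by
            rw [hgform, MvPolynomial.coeff_add, MvPolynomial.coeff_monomial, if_pos rfl,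
              MvPolynomial.coeff_monomial,
              if_neg (fun h => hne21 (add_left_cancel h)), add_zero]
          rw [h0] at h1
          simp at h1
        refine ⟨g, hgJ, hgne, ?_⟩
        rw [hgform, ltm_binomial m hlt2]
        congr 1
        rw [hatExp, hab0, hndef, add_comm]
    · set L := x ⊔ m' with hLdef
      obtain ⟨u, hu⟩ : ∃ u, u + x = L := ⟨L - x, tsub_add_cancel_of_le le_sup_left⟩
      obtain ⟨v, hv⟩ : ∃ v, v + m' = L := ⟨L - m', tsub_add_cancel_of_le le_sup_right⟩
      set g := monomial (L + Finsupp.single b2 1) (1:k) * f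
        - monomial (u + Finsupp.single b2 1) 1 * monomial (Finsupp.single b1 1 + x) 1
        - monomial v 1 * monomial (Finsupp.single b0 1 + Finsupp.single b2 1 + m') 1
        with hgdef
      have hgJ : g ∈ J := by
        refine sub_mem (sub_mem (Ideal.mul_mem_left _ _ hfJ) ?_) ?_
        · exact Ideal.mul_mem_left _ _ (hIJ hx.1)
        · exact Ideal.mul_mem_left _ _ (hIJ hm'.1)
      have hgval : g = monomial (L + Finsupp.single b2 1 + Finsupp.single b2 1) 1 := by
        have h1 : monomial (L + Finsupp.single b2 1) (1:k) * X b0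
            = monomial (L + Finsupp.single b2 1 + Finsupp.single b0 1) 1 := by
          rw [hXdef b0, MvPolynomial.monomial_mul, mul_one]
        have h2 : monomial (L + Finsupp.single b2 1) (1:k) * X b1
            = monomial (L + Finsupp.single b2 1 + Finsupp.single b1 1) 1 := by
          rw [hXdef b1, MvPolynomial.monomial_mul, mul_one]
        have h3 : monomial (L + Finsupp.single b2 1) (1:k) * X b2
            = monomial (L + Finsupp.single b2 1 + Finsupp.single b2 1) 1 := by
          rw [hXdef b2, MvPolynomial.monomial_mul, mul_one]
        have h4 : monomial (u + Finsupp.single b2 1) (1:k) * monomial (Finsupp.single b1 1 + x) 1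
            = monomial (L + Finsupp.single b2 1 + Finsupp.single b1 1) 1 := by
          rw [MvPolynomial.monomial_mul, mul_one]
          congr 1
          rw [← hu]
          abel
        have h5 : monomial v (1:k) * monomial (Finsupp.single b0 1 + Finsupp.single b2 1 + m') 1
            = monomial (L + Finsupp.single b2 1 + Finsupp.single b0 1) 1 := by
          rw [MvPolynomial.monomial_mul, mul_one]
          congr 1
          rw [← hv]
          abel
        rw [hgdef, hf, mul_add, mul_add, h1, h2, h3, h4, h5]
        ring
      have hexp : x ⊔ m' + Finsupp.single b2 2
          = L + Finsupp.single b2 1 + Finsupp.single b2 1 := by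
        have h22 : Finsupp.single b2 2 = Finsupp.single b2 1 + Finsupp.single b2 1 := by
          rw [← Finsupp.single_add]
        rw [hLdef, h22, ← add_assoc]
      refine ⟨g, hgJ, ?_, ?_⟩
      · rw [hgval, Ne, MvPolynomial.monomial_eq_zero]
        exact one_ne_zero
      · rw [hgval, ltm_monomial m one_ne_zero, hexp]
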